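/- Let 0 ≤ p ≤ 1, let Z = diag(1, −1) be the 2×2 Pauli-Z matrix, and define the channel Φ(ρ) = p Z ρ Z + (1−p) ρ on 2×2 matrices. Then inf over 2×2 density matrices ρ of F(Φ(ρ), ρ)² = 1 − p; equivalently, the fidelity-based maximal disturbance D_F^max(Φ) = 1 − (inf over density matrices ρ of F(Φ(ρ), ρ))² equals p. -/

import Mathlib

open scoped BigOperators ComplexOrder
open Matrix

noncomputable section

/-- A projective observable: a finite family of mutually orthogonal
self-adjoint idempotents summing to the identity. -/
def IsProjObs {d r : ℕ} (P : Fin r → Matrix (Fin d) (Fin d) ℂ) : Prop :=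
  (∀ i, (P i).IsHermitian) ∧ (∀ i, P i * P i = P i) ∧
    (∀ i k, i ≠ k → P i * P k = 0) ∧ (∑ i, P i = 1)

/-- A density matrix: positive semidefinite with unit trace. -/
def IsDensity {d : ℕ} (ρ : Matrix (Fin d) (Fin d) ℂ) : Prop :=
  ρ.PosSemidef ∧ ρ.trace = 1

/-- The measurement channel `E^A(ρ) = Σ_i P_i ρ P_i` of a projective observable. -/
def measChannel {d r : ℕ} (P : Fin r → Matrix (Fin d) (Fin d) ℂ)
    (ρ : Matrix (Fin d) (Fin d) ℂ) : Matrix (Fin d) (Fin d) ℂ :=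
  ∑ i, P i * ρ * P i

/-- `p^B_ρ(j) = tr(P^B_j ρ)`. -/
def probB {d rB : ℕ} (Q : Fin rB → Matrix (Fin d) (Fin d) ℂ)
    (ρ : Matrix (Fin d) (Fin d) ℂ) (j : Fin rB) : ℝ :=
  ((Q j * ρ).trace).re

/-- `q^{A→B}_ρ(j) = tr(P^B_j Σ_i P^A_i ρ P^A_i)`. -/
def probAB {d rA rB : ℕ} (P : Fin rA → Matrix (Fin d) (Fin d) ℂ)
    (Q : Fin rB → Matrix (Fin d) (Fin d) ℂ)
    (ρ : Matrix (Fin d) (Fin d) ℂ) (j : Fin rB) : ℝ :=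
  ((Q j * measChannel P ρ).trace).re

open Classical in
/-- The positive semidefinite square root of a PSD matrix (junk value `0` otherwise). -/
noncomputable def msqrt {d : ℕ} (A : Matrix (Fin d) (Fin d) ℂ) :
    Matrix (Fin d) (Fin d) ℂ :=
  if h : A.PosSemidef then (h.1.eigenvectorUnitary : Matrix (Fin d) (Fin d) ℂ) *
    diagonal (fun i => ((√(h.1.eigenvalues i) : ℝ) : ℂ)) *
    (star h.1.eigenvectorUnitary : Matrix (Fin d) (Fin d) ℂ) else 0

/-- `|X| = √(Xᴴ X)`, the positive semidefinite absolute value of a matrix. -/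
noncomputable def matAbs {d : ℕ} (X : Matrix (Fin d) (Fin d) ℂ) :
    Matrix (Fin d) (Fin d) ℂ :=
  msqrt (Xᴴ * X)

/-- The quantum fidelity `F(ρ,σ) = tr √(√ρ σ √ρ)`. -/
noncomputable def qFid {d : ℕ} (ρ σ : Matrix (Fin d) (Fin d) ℂ) : ℝ :=
  ((msqrt (msqrt ρ * σ * msqrt ρ)).trace).re

/-- Variational distance `D_1(p,q) = (1/2) Σ_j |p_j − q_j|`. -/
def distL1 {rB : ℕ} (p q : Fin rB → ℝ) : ℝ := (1 / 2) * ∑ j, |p j - q j|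

/-- Chebyshev distance `D_∞(p,q) = max_j |p_j − q_j|`. -/
noncomputable def distLinf {rB : ℕ} (p q : Fin rB → ℝ) : ℝ := ⨆ j, |p j - q j|

/-- Classical fidelity `F(p,q) = Σ_j √(p_j q_j)`. -/
noncomputable def classFid {rB : ℕ} (p q : Fin rB → ℝ) : ℝ :=
  ∑ j, Real.sqrt (p j * q j)

/-- `Q_1(A→B)`. -/
noncomputable def Q1 {d rA rB : ℕ} (P : Fin rA → Matrix (Fin d) (Fin d) ℂ)
    (Q : Fin rB → Matrix (Fin d) (Fin d) ℂ) : ℝ :=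
  sSup {x : ℝ | ∃ ρ, IsDensity ρ ∧ x = distL1 (probAB P Q ρ) (probB Q ρ)}

/-- `Q_∞(A→B)`. -/
noncomputable def Qinf {d rA rB : ℕ} (P : Fin rA → Matrix (Fin d) (Fin d) ℂ)
    (Q : Fin rB → Matrix (Fin d) (Fin d) ℂ) : ℝ :=
  sSup {x : ℝ | ∃ ρ, IsDensity ρ ∧ x = distLinf (probAB P Q ρ) (probB Q ρ)}

/-- `Q_F(A→B)`. -/
noncomputable def QF {d rA rB : ℕ} (P : Fin rA → Matrix (Fin d) (Fin d) ℂ)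
    (Q : Fin rB → Matrix (Fin d) (Fin d) ℂ) : ℝ :=
  sSup {x : ℝ | ∃ ρ, IsDensity ρ ∧
    x = 1 - (classFid (probAB P Q ρ) (probB Q ρ)) ^ 2}

/-- The rank-one projection `|v⟩⟨v|` onto a (unit) vector `v`. -/
def proj {d : ℕ} (v : Fin d → ℂ) : Matrix (Fin d) (Fin d) ℂ :=
  Matrix.vecMulVec v (star v)

namespace Aux18

lemma msqrt_psd {d : ℕ} {A : Matrix (Fin d) (Fin d) ℂ} (hA : A.PosSemidef) :
    (msqrt A).PosSemidef := by
  rw [msqrt, dif_pos hA]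
  have hD : (diagonal (fun i => ((√(hA.1.eigenvalues i) : ℝ) : ℂ))).PosSemidef :=
    posSemidef_diagonal_iff.mpr (fun i => Complex.zero_le_real.mpr (Real.sqrt_nonneg _))
  exact hD.mul_mul_conjTranspose_same (hA.1.eigenvectorUnitary : Matrix (Fin d) (Fin d) ℂ)

lemma msqrt_mul_self {d : ℕ} {A : Matrix (Fin d) (Fin d) ℂ} (hA : A.PosSemidef) :
    msqrt A * msqrt A = A := by
  rw [msqrt, dif_pos hA]
  have hU : star (hA.1.eigenvectorUnitary : Matrix (Fin d) (Fin d) ℂ) *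
      (hA.1.eigenvectorUnitary : Matrix (Fin d) (Fin d) ℂ) = 1 := by
    simp
  have hspec := hA.1.spectral_theorem
  rw [Unitary.conjStarAlgAut_apply] at hspec
  refine Eq.trans ?_ hspec.symm
  rw [show ∀ X Y D : Matrix (Fin d) (Fin d) ℂ, X * D * Y * (X * D * Y) = X * (D * (Y * X) * D) * Y
    from fun X Y D => by simp only [Matrix.mul_assoc], hU, Matrix.mul_one,
    Matrix.diagonal_mul_diagonal]
  refine congrArg (fun D => _ * D * _) (congrArg diagonal (funext fun i => ?_))
  rw [← Complex.ofReal_mul, Real.mul_self_sqrt (hA.eigenvalues_nonneg i)]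
  rfl

lemma cnonneg {z : ℂ} (h : 0 ≤ z) : z = (z.re : ℂ) ∧ 0 ≤ z.re := by
  rw [Complex.le_def] at h
  simp only [Complex.zero_re, Complex.zero_im] at h
  exact ⟨by apply Complex.ext <;> simp [h.2.symm], h.1⟩

lemma trace_sq_fin2 (S : Matrix (Fin 2) (Fin 2) ℂ) :
    S.trace ^ 2 = (S * S).trace + 2 * S.det := by
  simp [Matrix.trace, Matrix.diag, Matrix.mul_apply, Matrix.det_fin_two, Fin.sum_univ_two]
  ring

lemma psd_entry_nonneg {n : ℕ} {A : Matrix (Fin n) (Fin n) ℂ} (hA : A.PosSemidef) (i : Fin n) :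
    0 ≤ A i i := by
  exact hA.diag_nonneg

lemma psd_trace_nonneg {n : ℕ} {A : Matrix (Fin n) (Fin n) ℂ} (hA : A.PosSemidef) :
    0 ≤ A.trace :=
  Finset.sum_nonneg fun i _ => psd_entry_nonneg hA i

lemma psd_det_nonneg {n : ℕ} {A : Matrix (Fin n) (Fin n) ℂ} (hA : A.PosSemidef) :
    0 ≤ A.det := by
  rw [hA.1.det_eq_prod_eigenvalues, ← RCLike.ofReal_prod]
  have h : (0:ℝ) ≤ ∏ i, hA.1.eigenvalues i :=
    Finset.prod_nonneg fun i _ => hA.eigenvalues_nonneg i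
  exact (RCLike.ofReal_nonneg (K := ℂ)).mpr h

lemma qFid_nonneg {d : ℕ} {A B : Matrix (Fin d) (Fin d) ℂ}
    (hA : A.PosSemidef) (hB : B.PosSemidef) : 0 ≤ qFid A B := by
  have hS : (msqrt A).PosSemidef := msqrt_psd hA
  have hN : (msqrt A * B * msqrt A).PosSemidef := by
    have := hB.conjTranspose_mul_mul_same (msqrt A)
    rwa [hS.1] at this
  exact (cnonneg (psd_trace_nonneg (msqrt_psd hN))).2

lemma qFid_sq {A B : Matrix (Fin 2) (Fin 2) ℂ}
    (hA : A.PosSemidef) (hB : B.PosSemidef) :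
    (qFid A B) ^ 2 = ((A * B).trace).re + 2 * Real.sqrt (A.det.re * B.det.re) := by
  set S := msqrt A with hSdef
  have hS : S.PosSemidef := msqrt_psd hA
  have hSS : S * S = A := msqrt_mul_self hA
  have hN : (S * B * S).PosSemidef := by
    have := hB.conjTranspose_mul_mul_same S
    rwa [hS.1] at this
  set N := S * B * S with hNdef
  set T := msqrt N with hTdef
  have hT : T.PosSemidef := msqrt_psd hN
  have hTT : T * T = N := msqrt_mul_self hN
  obtain ⟨htr, htrpos⟩ := cnonneg (psd_trace_nonneg hT)
  obtain ⟨hdt, hdtpos⟩ := cnonneg (psd_det_nonneg hT)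
  obtain ⟨hdA, hdApos⟩ := cnonneg (psd_det_nonneg hA)
  obtain ⟨hdB, hdBpos⟩ := cnonneg (psd_det_nonneg hB)
  have key : T.trace ^ 2 = (A * B).trace + 2 * T.det := by
    rw [trace_sq_fin2, hTT]
    congr 1
    rw [hNdef, Matrix.trace_mul_comm, ← Matrix.mul_assoc, Matrix.trace_mul_comm, hSS,
      Matrix.trace_mul_comm]
  have detkey : T.det ^ 2 = A.det * B.det := by
    have h2 : T.det * T.det = N.det := by rw [← Matrix.det_mul, hTT]
    rw [sq, h2, hNdef, Matrix.det_mul, Matrix.det_mul, ← hSS, Matrix.det_mul]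
    ring
  have hreal : T.det.re ^ 2 = A.det.re * B.det.re := by
    rw [hdt, hdA, hdB] at detkey
    exact_mod_cast detkey
  have hsqrt : T.det.re = Real.sqrt (A.det.re * B.det.re) := by
    rw [← hreal, Real.sqrt_sq hdtpos]
  have qdef : qFid A B = T.trace.re := rfl
  have habtr : ((A*B).trace) = ((T.trace.re ^ 2 - 2 * T.det.re : ℝ) : ℂ) := by
    rw [htr, hdt] at key
    push_cast
    rw [key]; ring
  rw [qdef, ← hsqrt, habtr, Complex.ofReal_re]
  ring

lemma fid_ineq (p a s : ℝ) (hp0 : 0 ≤ p) (hp1 : p ≤ 1)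
    (hs : 0 ≤ s) (h1 : s ≤ a*(1-a)) (h2 : (1-2*p)^2*s ≤ a*(1-a)) :
    1 - p ≤ a^2 + (1-a)^2 + 2*(1-2*p)*s
      + 2*Real.sqrt ((a*(1-a)-(1-2*p)^2*s)*(a*(1-a)-s)) := by
  set X := a*(1-a)-(1-2*p)^2*s with hX
  set Y := a*(1-a)-s with hY
  have hXn : 0 ≤ X := by linarith
  have hYn : 0 ≤ Y := by linarith
  have h4s : 4*s ≤ 1 := by nlinarith [sq_nonneg (2*a-1)]
  rcases le_or_gt ((1-p) - (a^2+(1-a)^2) - 2*(1-2*p)*s) 0 with hc | hc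
  · have := Real.sqrt_nonneg (X*Y)
    linarith
  · have hps : 0 ≤ 1 - 4*p*s := by nlinarith
    have h5 : p*(1-4*s) ≤ 2*(a*(1-a)-s) := by nlinarith
    have hsq : (((1-p) - (a^2+(1-a)^2) - 2*(1-2*p)*s)/2)^2 ≤ X*Y := by
      nlinarith [mul_le_mul_of_nonneg_left (mul_le_mul_of_nonneg_right h5 hps) hp0,
        mul_nonneg (mul_nonneg (mul_nonneg hp0 hp0) (by linarith : (0:ℝ) ≤ 1-4*s))
          (by nlinarith : (0:ℝ) ≤ 1+4*s-8*p*s)]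
    have h6 := Real.sqrt_le_sqrt hsq
    rw [Real.sqrt_sq (by linarith)] at h6
    linarith

/-- The channel. -/
noncomputable def Φ (p : ℝ) (ρ : Matrix (Fin 2) (Fin 2) ℂ) : Matrix (Fin 2) (Fin 2) ℂ :=
  (p : ℂ) • (Matrix.diagonal ![1, -1] * ρ * Matrix.diagonal ![1, -1]) + (1 - (p : ℂ)) • ρ

lemma psd_smul_real {n : ℕ} {A : Matrix (Fin n) (Fin n) ℂ} (hA : A.PosSemidef)
    {r : ℝ} (hr : 0 ≤ r) : ((r : ℂ) • A).PosSemidef := by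
  constructor
  · unfold Matrix.IsHermitian
    rw [Matrix.conjTranspose_smul, hA.1]
    congr 1
    simp [Complex.star_def, Complex.conj_ofReal]
  · intro x
    exact (hA.smul (Complex.zero_le_real.mpr hr)).2 x

lemma Z_herm : (Matrix.diagonal ![1, -1] : Matrix (Fin 2) (Fin 2) ℂ)ᴴ =
    Matrix.diagonal ![1, -1] := by
  have hv : star ![1, -1] = (![1, -1] : Fin 2 → ℂ) := by
    funext i; fin_cases i <;> simp
  rw [Matrix.diagonal_conjTranspose, hv]

lemma Φ_psd {p : ℝ} (hp0 : 0 ≤ p) (hp1 : p ≤ 1) {ρ : Matrix (Fin 2) (Fin 2) ℂ}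
    (hρ : ρ.PosSemidef) : (Φ p ρ).PosSemidef := by
  have hZ : (Matrix.diagonal ![1, -1] * ρ * Matrix.diagonal ![1, -1]).PosSemidef := by
    have := hρ.conjTranspose_mul_mul_same (Matrix.diagonal ![1, -1])
    rwa [Z_herm] at this
  have h1 : ((p : ℂ) • (Matrix.diagonal ![1, -1] * ρ * Matrix.diagonal ![1, -1])).PosSemidef :=
    psd_smul_real hZ hp0
  have h2 : ((1 - (p:ℂ)) • ρ).PosSemidef := by
    have : (1 - (p:ℂ)) = (((1 - p : ℝ)) : ℂ) := by push_cast; ring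
    rw [this]
    exact psd_smul_real hρ (by linarith)
  exact h1.add h2

lemma Φ_trace_re (p : ℝ) (ρ : Matrix (Fin 2) (Fin 2) ℂ)
    (h10 : ρ 1 0 = starRingEnd ℂ (ρ 0 1)) (a d : ℝ)
    (ha : ρ 0 0 = (a : ℂ)) (hd : ρ 1 1 = (d : ℂ)) :
    ((Φ p ρ * ρ).trace).re = a^2 + d^2 + 2*(1-2*p)*(Complex.normSq (ρ 0 1)) := by
  simp only [Φ, Matrix.trace_fin_two, Matrix.mul_apply, Fin.sum_univ_two,
    Matrix.add_apply, Matrix.smul_apply, Matrix.mul_diagonal, Matrix.diagonal_mul,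
    Matrix.cons_val_zero, Matrix.cons_val_one, Matrix.head_cons, smul_eq_mul,
    ha, hd, h10]
  simp [Complex.normSq_apply, Complex.add_re, Complex.mul_re, Complex.mul_im,
    Complex.sub_re, Complex.sub_im, Complex.ofReal_re, Complex.ofReal_im,
    Complex.conj_re, Complex.conj_im]
  ring

lemma rho_det_re (ρ : Matrix (Fin 2) (Fin 2) ℂ)
    (h10 : ρ 1 0 = starRingEnd ℂ (ρ 0 1)) (a d : ℝ)
    (ha : ρ 0 0 = (a : ℂ)) (hd : ρ 1 1 = (d : ℂ)) :
    (ρ.det).re = a*d - Complex.normSq (ρ 0 1) := by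
  simp only [Matrix.det_fin_two, ha, hd, h10]
  simp [Complex.normSq_apply, Complex.sub_re, Complex.mul_re, Complex.mul_im,
    Complex.ofReal_re, Complex.ofReal_im, Complex.conj_re, Complex.conj_im]

lemma Φ_det_re (p : ℝ) (ρ : Matrix (Fin 2) (Fin 2) ℂ)
    (h10 : ρ 1 0 = starRingEnd ℂ (ρ 0 1)) (a d : ℝ)
    (ha : ρ 0 0 = (a : ℂ)) (hd : ρ 1 1 = (d : ℂ)) :
    ((Φ p ρ).det).re = a*d - (1-2*p)^2 * Complex.normSq (ρ 0 1) := by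
  simp only [Φ, Matrix.det_fin_two, Matrix.add_apply, Matrix.smul_apply,
    Matrix.mul_diagonal, Matrix.diagonal_mul, Matrix.cons_val_zero,
    Matrix.cons_val_one, Matrix.head_cons, smul_eq_mul, ha, hd, h10]
  simp [Complex.normSq_apply, Complex.sub_re, Complex.sub_im, Complex.add_re,
    Complex.add_im, Complex.mul_re, Complex.mul_im, Complex.ofReal_re,
    Complex.ofReal_im, Complex.conj_re, Complex.conj_im]
  ring

lemma main_bound {p : ℝ} (hp0 : 0 ≤ p) (hp1 : p ≤ 1) {ρ : Matrix (Fin 2) (Fin 2) ℂ}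
    (hρ : IsDensity ρ) : 1 - p ≤ (qFid (Φ p ρ) ρ) ^ 2 := by
  obtain ⟨hpsd, htr⟩ := hρ
  obtain ⟨ha_eq, ha_nn⟩ := cnonneg (psd_entry_nonneg hpsd 0)
  obtain ⟨hd_eq, hd_nn⟩ := cnonneg (psd_entry_nonneg hpsd 1)
  have h10 : ρ 1 0 = starRingEnd ℂ (ρ 0 1) := by
    have := congrFun (congrFun hpsd.1 1) 0
    rw [Matrix.conjTranspose_apply] at this
    exact this.symm
  set a := (ρ 0 0).re with hadef
  set d := (ρ 1 1).re with hddef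
  set s := Complex.normSq (ρ 0 1) with hsdef
  have had : a + d = 1 := by
    have := congrArg Complex.re (Matrix.trace_fin_two ρ ▸ htr)
    simpa using this
  have hd1 : d = 1 - a := by linarith
  have hs : 0 ≤ s := Complex.normSq_nonneg _
  have hσ : (Φ p ρ).PosSemidef := Φ_psd hp0 hp1 hpsd
  have hdρ : ρ.det.re = a*d - s := rho_det_re ρ h10 a d ha_eq hd_eq
  have hdσ : (Φ p ρ).det.re = a*d - (1-2*p)^2*s := Φ_det_re p ρ h10 a d ha_eq hd_eq
  have h1 : s ≤ a*d := by
    have := (cnonneg (psd_det_nonneg hpsd)).2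
    rw [hdρ] at this; linarith
  have h2 : (1-2*p)^2*s ≤ a*d := by
    have := (cnonneg (psd_det_nonneg hσ)).2
    rw [hdσ] at this; linarith
  rw [qFid_sq hσ hpsd, Φ_trace_re p ρ h10 a d ha_eq hd_eq, hdρ, hdσ]
  rw [hd1] at h1 h2 ⊢
  exact fid_ineq p a s hp0 hp1 hs h1 h2

def rho0 : Matrix (Fin 2) (Fin 2) ℂ := !![1/2, 1/2; 1/2, 1/2]

lemma rho0_density : IsDensity rho0 := by
  constructor
  · refine Matrix.PosSemidef.of_dotProduct_mulVec_nonneg ?_ ?_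
    · ext i j
      fin_cases i <;> fin_cases j <;> simp [rho0, Matrix.conjTranspose_apply]
    · intro x
      have : (dotProduct (star x) (rho0 *ᵥ x)) =
          (1/2 : ℂ) * (star (x 0 + x 1) * (x 0 + x 1)) := by
        simp [rho0, dotProduct, Matrix.mulVec, Fin.sum_univ_two]
        ring
      rw [this]
      exact mul_nonneg (by rw [Complex.le_def]; norm_num) (star_mul_self_nonneg _)
  · simp [rho0, Matrix.trace_fin_two]
    norm_num

lemma rho0_entries : rho0 0 0 = (((1:ℝ)/2 : ℝ) : ℂ) ∧ rho0 1 1 = (((1:ℝ)/2 : ℝ) : ℂ) ∧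
    rho0 1 0 = starRingEnd ℂ (rho0 0 1) ∧ Complex.normSq (rho0 0 1) = 1/4 := by
  refine ⟨by norm_num [rho0], by norm_num [rho0], by norm_num [rho0, Complex.ext_iff], ?_⟩
  have : rho0 0 1 = (1/2 : ℂ) := by norm_num [rho0]
  rw [this]
  simp [Complex.normSq_apply]
  norm_num

lemma witness_sq {p : ℝ} (hp0 : 0 ≤ p) (hp1 : p ≤ 1) :
    (qFid (Φ p rho0) rho0) ^ 2 = 1 - p := by
  obtain ⟨h00, h11, h10, hns⟩ := rho0_entries
  have hpsd := rho0_density.1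
  have hσ : (Φ p rho0).PosSemidef := Φ_psd hp0 hp1 hpsd
  rw [qFid_sq hσ hpsd, Φ_trace_re p rho0 h10 _ _ h00 h11,
    rho_det_re rho0 h10 _ _ h00 h11, hns]
  norm_num
  ring

lemma witness {p : ℝ} (hp0 : 0 ≤ p) (hp1 : p ≤ 1) :
    qFid (Φ p rho0) rho0 = Real.sqrt (1 - p) := by
  have h := witness_sq hp0 hp1
  have hnn : 0 ≤ qFid (Φ p rho0) rho0 := qFid_nonneg (Φ_psd hp0 hp1 rho0_density.1) rho0_density.1
  rw [← h, Real.sqrt_sq hnn]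

end Aux18

theorem stmt_18 (p : ℝ) (hp0 : 0 ≤ p) (hp1 : p ≤ 1) :
    (sInf {x : ℝ | ∃ ρ : Matrix (Fin 2) (Fin 2) ℂ, IsDensity ρ ∧
        x = (qFid ((p : ℂ) • (Matrix.diagonal ![1, -1] * ρ * Matrix.diagonal ![1, -1]) +
              (1 - (p : ℂ)) • ρ) ρ) ^ 2} = 1 - p) ∧
      1 - (sInf {x : ℝ | ∃ ρ : Matrix (Fin 2) (Fin 2) ℂ, IsDensity ρ ∧
        x = qFid ((p : ℂ) • (Matrix.diagonal ![1, -1] * ρ * Matrix.diagonal ![1, -1]) +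
              (1 - (p : ℂ)) • ρ) ρ}) ^ 2 = p := by
  open Aux18 in
  have lb1 : ∀ x ∈ {x : ℝ | ∃ ρ : Matrix (Fin 2) (Fin 2) ℂ, IsDensity ρ ∧
        x = (qFid ((p : ℂ) • (Matrix.diagonal ![1, -1] * ρ * Matrix.diagonal ![1, -1]) +
              (1 - (p : ℂ)) • ρ) ρ) ^ 2}, 1 - p ≤ x := by
    rintro x ⟨ρ, hρ, rfl⟩
    exact Aux18.main_bound hp0 hp1 hρ
  have mem1 : (1 - p) ∈ {x : ℝ | ∃ ρ : Matrix (Fin 2) (Fin 2) ℂ, IsDensity ρ ∧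
        x = (qFid ((p : ℂ) • (Matrix.diagonal ![1, -1] * ρ * Matrix.diagonal ![1, -1]) +
              (1 - (p : ℂ)) • ρ) ρ) ^ 2} :=
    ⟨Aux18.rho0, Aux18.rho0_density, (Aux18.witness_sq hp0 hp1).symm⟩
  have lb2 : ∀ x ∈ {x : ℝ | ∃ ρ : Matrix (Fin 2) (Fin 2) ℂ, IsDensity ρ ∧
        x = qFid ((p : ℂ) • (Matrix.diagonal ![1, -1] * ρ * Matrix.diagonal ![1, -1]) +
              (1 - (p : ℂ)) • ρ) ρ}, Real.sqrt (1 - p) ≤ x := by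
    rintro x ⟨ρ, hρ, rfl⟩
    have h := Real.sqrt_le_sqrt (Aux18.main_bound hp0 hp1 hρ)
    rwa [Real.sqrt_sq (Aux18.qFid_nonneg (Aux18.Φ_psd hp0 hp1 hρ.1) hρ.1)] at h
  have mem2 : Real.sqrt (1 - p) ∈ {x : ℝ | ∃ ρ : Matrix (Fin 2) (Fin 2) ℂ, IsDensity ρ ∧
        x = qFid ((p : ℂ) • (Matrix.diagonal ![1, -1] * ρ * Matrix.diagonal ![1, -1]) +
              (1 - (p : ℂ)) • ρ) ρ} :=
    ⟨Aux18.rho0, Aux18.rho0_density, (Aux18.witness hp0 hp1).symm⟩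
  constructor
  · exact le_antisymm (csInf_le ⟨1 - p, fun x hx => lb1 x hx⟩ mem1)
      (le_csInf ⟨_, mem1⟩ lb1)
  · have h2 : sInf {x : ℝ | ∃ ρ : Matrix (Fin 2) (Fin 2) ℂ, IsDensity ρ ∧
        x = qFid ((p : ℂ) • (Matrix.diagonal ![1, -1] * ρ * Matrix.diagonal ![1, -1]) +
              (1 - (p : ℂ)) • ρ) ρ} = Real.sqrt (1 - p) :=
      le_antisymm (csInf_le ⟨Real.sqrt (1 - p), fun x hx => lb2 x hx⟩ mem2)
        (le_csInf ⟨_, mem2⟩ lb2)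
    rw [h2, Real.sq_sqrt (by linarith)]
    ring

end
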